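/- For a T0 space X, the following conditions are equivalent: (1) X is sober; (2) X is a DC space and a d-space; (3) X is well-filtered and a DC space; (4) X is well-filtered and a Rudin space; (5) X is well-filtered and a well-filtered determined (WD) space. -/

import Mathlib

open Set Topology

universe u

variable {X : Type u}

/-- Specialization order: `x ≤ y` iff `x ∈ closure {y}`. -/
def specLE [TopologicalSpace X] (x y : X) : Prop := x ∈ closure ({y} : Set X)

/-- Directed subset w.r.t. the specialization order. -/
def dirOn [TopologicalSpace X] (D : Set X) : Prop :=
  D.Nonempty ∧ ∀ a ∈ D, ∀ b ∈ D, ∃ c ∈ D, specLE a c ∧ specLE b c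

/-- Downward closure w.r.t. the specialization order. -/
def dClo [TopologicalSpace X] (A : Set X) : Set X := {x | ∃ a ∈ A, specLE x a}

/-- Upward closure w.r.t. the specialization order. -/
def uClo [TopologicalSpace X] (A : Set X) : Set X := {x | ∃ a ∈ A, specLE a x}

/-- `x` is a supremum of `D` w.r.t. the specialization order. -/
def IsSupOf [TopologicalSpace X] (D : Set X) (x : X) : Prop :=
  (∀ d ∈ D, specLE d x) ∧ ∀ y, (∀ d ∈ D, specLE d y) → specLE x y

/-- A d-space: a T0 space in which every directed set (for the specialization order)
has a supremum, and every open set is inaccessible by directed suprema. -/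
def IsDSpace (X : Type u) [TopologicalSpace X] : Prop :=
  T0Space X ∧ (∀ D : Set X, dirOn D → ∃ x, IsSupOf D x) ∧
    ∀ D : Set X, dirOn D → ∀ x, IsSupOf D x →
      ∀ U : Set X, IsOpen U → x ∈ U → (D ∩ U).Nonempty

/-- A set is saturated if it is the intersection of the open sets containing it. -/
def IsSat [TopologicalSpace X] (A : Set X) : Prop :=
  A = ⋂₀ {U : Set X | IsOpen U ∧ A ⊆ U}

/-- The collection of nonempty compact saturated subsets. -/
def KSet (X : Type u) [TopologicalSpace X] : Set (Set X) :=
  {K | K.Nonempty ∧ IsCompact K ∧ IsSat K}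

/-- A filtered family of sets: nonempty, and every two members contain a common member. -/
def FiltFam [TopologicalSpace X] (𝒦 : Set (Set X)) : Prop :=
  𝒦.Nonempty ∧ ∀ K₁ ∈ 𝒦, ∀ K₂ ∈ 𝒦, ∃ K₃ ∈ 𝒦, K₃ ⊆ K₁ ∧ K₃ ⊆ K₂

/-- Well-filtered space. -/
def IsWF (X : Type u) [TopologicalSpace X] : Prop :=
  T0Space X ∧ ∀ 𝒦 : Set (Set X), 𝒦 ⊆ KSet X → FiltFam 𝒦 →
    ∀ U : Set X, IsOpen U → ⋂₀ 𝒦 ⊆ U → ∃ K ∈ 𝒦, K ⊆ U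

/-- Sober space: every irreducible closed subset is the closure of a unique point. -/
def IsSober (X : Type u) [TopologicalSpace X] : Prop :=
  ∀ A : Set X, IsIrreducible A → IsClosed A → ∃! x : X, A = closure {x}

/-- `V` is way below `U` in the lattice of open sets: every open cover of `U`
has a finite subfamily covering `V`. -/
def wayBelow [TopologicalSpace X] (V U : Set X) : Prop :=
  ∀ 𝒞 : Set (Set X), (∀ W ∈ 𝒞, IsOpen W) → U ⊆ ⋃₀ 𝒞 →
    ∃ 𝒟 ⊆ 𝒞, 𝒟.Finite ∧ V ⊆ ⋃₀ 𝒟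

/-- Core compact space. -/
def CoreCompact (X : Type u) [TopologicalSpace X] : Prop :=
  ∀ (x : X) (U : Set X), IsOpen U → x ∈ U →
    ∃ V : Set X, IsOpen V ∧ x ∈ V ∧ wayBelow V U

/-- The underlying type of the Smyth power space: nonempty compact saturated subsets. -/
abbrev KS (X : Type u) [TopologicalSpace X] : Type u :=
  {K : Set X // K.Nonempty ∧ IsCompact K ∧ IsSat K}

/-- The upper Vietoris topology on `KS X`, generated by the sets
`□U = {K | K ⊆ U}` for `U` open; this makes `KS X` the Smyth power space `P_S(X)`. -/
instance (X : Type u) [TopologicalSpace X] : TopologicalSpace (KS X) :=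
  TopologicalSpace.generateFrom
    {S | ∃ U : Set X, IsOpen U ∧ S = {K : KS X | (K : Set X) ⊆ U}}

/-- Rudin set: a nonempty closed set that is a minimal closed set meeting all
members of some filtered family of nonempty compact saturated sets. -/
def RudinSet [TopologicalSpace X] (A : Set X) : Prop :=
  IsClosed A ∧ A.Nonempty ∧ ∃ 𝒦 : Set (Set X), 𝒦 ⊆ KSet X ∧ FiltFam 𝒦 ∧
    (∀ K ∈ 𝒦, (K ∩ A).Nonempty) ∧
    ∀ B : Set X, IsClosed B → B ⊆ A → (∀ K ∈ 𝒦, (K ∩ B).Nonempty) → B = A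

/-- Well-filtered determined (WD) set. -/
def IsWDSet [TopologicalSpace X] (A : Set X) : Prop :=
  IsClosed A ∧ A.Nonempty ∧ ∀ (Y : Type u) [TopologicalSpace Y], IsWF Y →
    ∀ f : X → Y, Continuous f → ∃ y : Y, closure (f '' A) = closure {y}

/-- Rudin space: every irreducible closed set is a Rudin set. -/
def RudinSpace (X : Type u) [TopologicalSpace X] : Prop :=
  ∀ A : Set X, IsClosed A → IsIrreducible A → RudinSet A

/-- WD space: every irreducible closed set is a WD set. -/
def WDSpace (X : Type u) [TopologicalSpace X] : Prop :=
  ∀ A : Set X, IsClosed A → IsIrreducible A → IsWDSet A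

/-- DC space: every irreducible closed set is the closure of a directed set. -/
def DCSpace (X : Type u) [TopologicalSpace X] : Prop :=
  ∀ A : Set X, IsClosed A → IsIrreducible A → ∃ D : Set X, dirOn D ∧ A = closure D


section aux9
variable [TopologicalSpace X]

lemma specLE_refl' (x : X) : specLE x x := subset_closure rfl

lemma specLE_trans' {x y z : X} (h1 : specLE x y) (h2 : specLE y z) : specLE x z :=
  (closure_minimal (Set.singleton_subset_iff.mpr h2) isClosed_closure) h1

lemma open_upper' {U : Set X} (hU : IsOpen U) {x y : X} (hxy : specLE x y) (hx : x ∈ U) :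
    y ∈ U := by
  rcases mem_closure_iff.mp hxy U hU hx with ⟨z, hzU, hz⟩
  rcases hz with rfl; exact hzU

lemma closed_lower' {C : Set X} (hC : IsClosed C) {x y : X} (hxy : specLE x y) (hy : y ∈ C) :
    x ∈ C := (closure_minimal (Set.singleton_subset_iff.mpr hy) hC) hxy

lemma specLE_antisymm' [T0Space X] {x y : X} (h1 : specLE x y) (h2 : specLE y x) : x = y := by
  have hx : closure ({x} : Set X) = closure {y} :=
    subset_antisymm (closure_minimal (Set.singleton_subset_iff.mpr h1) isClosed_closure)
      (closure_minimal (Set.singleton_subset_iff.mpr h2) isClosed_closure)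
  exact ((inseparable_iff_closure_eq).mpr hx).eq

lemma dirOn_irreducible' {D : Set X} (hD : dirOn D) : IsIrreducible D := by
  refine ⟨hD.1, fun U V hU hV h1 h2 => ?_⟩
  obtain ⟨a, haD, haU⟩ := h1
  obtain ⟨b, hbD, hbV⟩ := h2
  obtain ⟨c, hcD, hac, hbc⟩ := hD.2 a haD b hbD
  exact ⟨c, hcD, open_upper' hU hac haU, open_upper' hV hbc hbV⟩

/-- saturated sets are upper sets -/
lemma sat_upper' {K : Set X} (hK : K ∈ KSet X) {a x : X} (ha : a ∈ K) (hax : specLE a x) :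
    x ∈ K := by
  rw [hK.2.2]
  exact fun U hU => open_upper' hU.1 hax (hU.2 ha)

/-- principal upper sets -/
def ups (x : X) : Set X := {y | specLE x y}

lemma ups_mem_KSet (x : X) : ups x ∈ KSet X := by
  refine ⟨⟨x, specLE_refl' x⟩, ?_, ?_⟩
  · refine isCompact_of_finite_subcover fun {ι} U hU hsub => ?_
    obtain ⟨i, hi⟩ := Set.mem_iUnion.mp (hsub (specLE_refl' x))
    refine ⟨{i}, fun y hy => ?_⟩
    have : y ∈ U i := open_upper' (hU i) hy hi
    simpa using this
  · apply subset_antisymm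
    · exact fun y hy => Set.mem_sInter.mpr fun U hU => hU.2 hy
    · intro z hz
      rw [Set.mem_sInter] at hz
      show x ∈ closure {z}
      rw [mem_closure_iff]
      intro U hU hxU
      have hup : ups x ⊆ U := fun y hy => open_upper' hU hy hxU
      exact ⟨z, hz U ⟨hU, hup⟩, rfl⟩

/-- A finite nonempty subfamily of a chain has a least element. -/
lemma chain_finset_exists_min' {c : Set (Set X)} (hchain : IsChain (· ⊆ ·) c)
    {u : Finset (Set X)} (hu : u.Nonempty) (huc : ↑u ⊆ c) :
    ∃ C0 ∈ u, ∀ C ∈ u, C0 ⊆ C := by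
  obtain ⟨C0, hC0u, hmin⟩ := Finset.exists_minimal hu
  refine ⟨C0, hC0u, fun C hC => ?_⟩
  rcases eq_or_ne C C0 with rfl | hne
  · exact le_rfl
  rcases hchain.total (huc hC) (huc hC0u) with h | h
  · exact absurd (hmin hC h) (fun h' => hne (le_antisymm h h'))
  · exact h

/-- Zorn: existence of a minimal closed set meeting every member of a filtered family. -/
lemma exists_min_closed' {𝒦 : Set (Set X)} (h𝒦 : 𝒦 ⊆ KSet X)
    {A0 : Set X} (hA0 : IsClosed A0) (hmeet : ∀ K ∈ 𝒦, (K ∩ A0).Nonempty) :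
    ∃ A, A ⊆ A0 ∧ IsClosed A ∧ (∀ K ∈ 𝒦, (K ∩ A).Nonempty) ∧
      ∀ B, B ⊆ A → IsClosed B → (∀ K ∈ 𝒦, (K ∩ B).Nonempty) → B = A := by
  classical
  set S : Set (Set X) := {C | IsClosed C ∧ ∀ K ∈ 𝒦, (K ∩ C).Nonempty} with hS
  have hZ : ∀ c ⊆ S, IsChain (· ⊆ ·) c → c.Nonempty → ∃ lb ∈ S, ∀ s ∈ c, lb ⊆ s := by
    intro c hcS hchain hcne
    refine ⟨⋂₀ c, ⟨isClosed_sInter fun C hC => (hcS hC).1, ?_⟩,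
      fun s hs => Set.sInter_subset_of_mem hs⟩
    intro K hK
    have hKc : IsCompact K := (h𝒦 hK).2.1
    have hne : (K ∩ ⋂ C : c, (C : Set X)).Nonempty := by
      apply hKc.inter_iInter_nonempty
      · exact fun C => (hcS C.2).1
      · intro u
        by_cases hu : u.Nonempty
        · obtain ⟨C0, hC0u, hC0⟩ := chain_finset_exists_min' hchain
            (hu.image (Subtype.val : c → Set X))
            (by rintro C hC
                simp only [Finset.coe_image, Set.mem_image] at hC
                obtain ⟨i, -, rfl⟩ := hC
                exact i.2)
          simp only [Finset.mem_image] at hC0u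
          obtain ⟨i0, hi0u, rfl⟩ := hC0u
          obtain ⟨k, hkK, hk0⟩ := (hcS i0.2).2 K hK
          refine ⟨k, hkK, Set.mem_biInter fun i hi => ?_⟩
          exact hC0 i (Finset.mem_image_of_mem _ hi) hk0
        · rw [Finset.not_nonempty_iff_eq_empty.mp hu]
          obtain ⟨C, hCc⟩ := hcne
          obtain ⟨k, hkK, -⟩ := (hcS hCc).2 K hK
          exact ⟨k, hkK, by simp⟩
    obtain ⟨k, hkK, hk⟩ := hne
    exact ⟨k, hkK, Set.mem_sInter.mpr fun C hC => Set.mem_iInter.mp hk ⟨C, hC⟩⟩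
  obtain ⟨m, hm0, hmmin⟩ := zorn_superset_nonempty S hZ A0 ⟨hA0, hmeet⟩
  refine ⟨m, hm0, hmmin.prop.1, hmmin.prop.2, fun B hBm hBc hBmeet => ?_⟩
  exact subset_antisymm hBm (hmmin.2 ⟨hBc, hBmeet⟩ hBm)

/-- Rudin's lemma: a minimal closed set meeting every member of a filtered family
of compact sets is irreducible. -/
lemma min_irreducible' {𝒦 : Set (Set X)} (hf : FiltFam 𝒦) {A : Set X} (hA : IsClosed A)
    (hmeet : ∀ K ∈ 𝒦, (K ∩ A).Nonempty)
    (hmin : ∀ B, B ⊆ A → IsClosed B → (∀ K ∈ 𝒦, (K ∩ B).Nonempty) → B = A) :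
    IsIrreducible A := by
  obtain ⟨K0, hK0⟩ := hf.1
  refine ⟨(hmeet K0 hK0).mono Set.inter_subset_right, fun U V hU hV h1 h2 => ?_⟩
  by_contra hUV
  obtain ⟨a, haA, haU⟩ := h1
  obtain ⟨b, hbA, hbV⟩ := h2
  have hF12 : A ⊆ (A \ U) ∪ (A \ V) := by
    intro x hx
    by_cases hxV : x ∈ V
    · exact Or.inl ⟨hx, fun hxU => hUV ⟨x, hx, hxU, hxV⟩⟩
    · exact Or.inr ⟨hx, hxV⟩
  have key : (∀ K ∈ 𝒦, (K ∩ (A \ U)).Nonempty) ∨ ∀ K ∈ 𝒦, (K ∩ (A \ V)).Nonempty := by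
    by_contra h
    push_neg at h
    obtain ⟨⟨K1, hK1, hK1e⟩, ⟨K2, hK2, hK2e⟩⟩ := h
    obtain ⟨K3, hK3, h31, h32⟩ := hf.2 K1 hK1 K2 hK2
    obtain ⟨k, hkK3, hkA⟩ := hmeet K3 hK3
    rcases hF12 hkA with hk | hk
    · exact Set.eq_empty_iff_forall_notMem.mp hK1e k ⟨h31 hkK3, hk⟩
    · exact Set.eq_empty_iff_forall_notMem.mp hK2e k ⟨h32 hkK3, hk⟩
  rcases key with h | h
  · have hEq := hmin (A \ U) Set.diff_subset (hA.sdiff hU) h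
    have haAU : a ∈ A \ U := by rw [hEq]; exact haA
    exact haAU.2 haU
  · have hEq := hmin (A \ V) Set.diff_subset (hA.sdiff hV) h
    have hbAV : b ∈ A \ V := by rw [hEq]; exact hbA
    exact hbAV.2 hbV

lemma sober_to_WF' [T0Space X] (hs : IsSober X) : IsWF X := by
  refine ⟨inferInstance, fun 𝒦 h𝒦 hf U hU hsub => ?_⟩
  by_contra hno
  push_neg at hno
  have hmeet : ∀ K ∈ 𝒦, (K ∩ Uᶜ).Nonempty := by
    intro K hK
    obtain ⟨k, hkK, hkU⟩ := Set.not_subset.mp (hno K hK)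
    exact ⟨k, hkK, hkU⟩
  obtain ⟨A, hAsub, hAcl, hAmeet, hAmin⟩ := exists_min_closed' h𝒦 hU.isClosed_compl hmeet
  have hirr := min_irreducible' hf hAcl hAmeet hAmin
  obtain ⟨x, hxA, -⟩ := hs A hirr hAcl
  have hxmem : x ∈ A := by rw [hxA]; exact subset_closure rfl
  have hxK : ∀ K ∈ 𝒦, x ∈ K := by
    intro K hK
    obtain ⟨k, hkK, hkA⟩ := hAmeet K hK
    have hk : specLE k x := by rw [hxA] at hkA; exact hkA
    exact sat_upper' (h𝒦 hK) hkK hk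
  exact (hAsub hxmem) (hsub (Set.mem_sInter.mpr hxK))

lemma closure_singleton_unique' [T0Space X] {A : Set X} {x : X}
    (hx : A = closure {x}) : ∃! y, A = closure ({y} : Set X) := by
  refine ⟨x, hx, fun y hy => ?_⟩
  have h1 : specLE y x := by
    have : y ∈ A := by rw [hy]; exact subset_closure rfl
    rw [hx] at this; exact this
  have h2 : specLE x y := by
    have : x ∈ A := by rw [hx]; exact subset_closure rfl
    rw [hy] at this; exact this
  exact specLE_antisymm' h1 h2

lemma sup_of_closure_eq' {D : Set X} {x : X} (hx : closure D = closure {x}) :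
    IsSupOf D x := by
  constructor
  · intro d hd
    have : d ∈ closure D := subset_closure hd
    rw [hx] at this; exact this
  · intro y hy
    have hsub : closure D ⊆ closure ({y} : Set X) :=
      closure_minimal (fun d hd => hy d hd) isClosed_closure
    have hxD : x ∈ closure D := by rw [hx]; exact subset_closure rfl
    exact hsub hxD

lemma sober_to_DC' (hs : IsSober X) : DCSpace X := by
  intro A hAc hAi
  obtain ⟨x, hx, -⟩ := hs A hAi hAc
  refine ⟨{x}, ⟨⟨x, rfl⟩, ?_⟩, hx⟩
  intro a ha b hb
  rw [Set.mem_singleton_iff] at ha hb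
  exact ⟨x, rfl, by rw [ha]; exact specLE_refl' x, by rw [hb]; exact specLE_refl' x⟩

lemma sober_to_D' [T0Space X] (hs : IsSober X) : IsDSpace X := by
  have key : ∀ D : Set X, dirOn D → ∃ x, closure D = closure {x} := by
    intro D hD
    obtain ⟨x, hx, -⟩ := hs (closure D) (dirOn_irreducible' hD).closure isClosed_closure
    exact ⟨x, hx⟩
  refine ⟨inferInstance, fun D hD => (key D hD).imp fun x hx => sup_of_closure_eq' hx, ?_⟩
  intro D hD x hx U hU hxU
  obtain ⟨x', hx'⟩ := key D hD
  have hsup' := sup_of_closure_eq' hx'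
  have hxx' : x = x' := specLE_antisymm' (hx.2 x' hsup'.1) (hsup'.2 x hx.1)
  have hxD : x ∈ closure D := by rw [hxx', hx']; exact subset_closure rfl
  obtain ⟨d, hdU, hdD⟩ := mem_closure_iff.mp hxD U hU hxU
  exact ⟨d, hdD, hdU⟩

end aux9

/-- for a T0 space, sober ⇔ DC d-space ⇔ well-filtered DC space
⇔ well-filtered Rudin space ⇔ well-filtered WD space. -/
theorem stmt9 {X : Type u} [TopologicalSpace X] [T0Space X] :
    List.TFAE [IsSober X,
      DCSpace X ∧ IsDSpace X,
      IsWF X ∧ DCSpace X,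
      IsWF X ∧ RudinSpace X,
      IsWF X ∧ WDSpace X] := by
  tfae_have 1 → 2 := fun hs => ⟨sober_to_DC' hs, sober_to_D' hs⟩
  tfae_have 2 → 1 := by
    rintro ⟨hdc, hd⟩ A hAi hAc
    obtain ⟨D, hDdir, hAD⟩ := hdc A hAc hAi
    obtain ⟨x, hsup⟩ := hd.2.1 D hDdir
    have h1 : D ⊆ closure {x} := fun d hd' => hsup.1 d hd'
    have h2 : x ∈ closure D := by
      rw [mem_closure_iff]
      intro U hU hxU
      obtain ⟨d, hdD, hdU⟩ := hd.2.2 D hDdir x hsup U hU hxU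
      exact ⟨d, hdU, hdD⟩
    have hAx : A = closure {x} := by
      rw [hAD]
      exact subset_antisymm (closure_minimal h1 isClosed_closure)
        (closure_minimal (Set.singleton_subset_iff.mpr h2) isClosed_closure)
    exact closure_singleton_unique' hAx
  tfae_have 1 → 3 := fun hs => ⟨sober_to_WF' hs, sober_to_DC' hs⟩
  tfae_have 3 → 1 := by
    rintro ⟨hwf, hdc⟩ A hAi hAc
    obtain ⟨D, hDdir, hAD⟩ := hdc A hAc hAi
    set 𝒦 : Set (Set X) := (fun d => ups d) '' D with h𝒦def
    have h𝒦 : 𝒦 ⊆ KSet X := by rintro K ⟨d, hd, rfl⟩; exact ups_mem_KSet d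
    have hff : FiltFam 𝒦 := by
      refine ⟨hDdir.1.image _, ?_⟩
      rintro K1 ⟨d1, hd1, rfl⟩ K2 ⟨d2, hd2, rfl⟩
      obtain ⟨c, hc, hc1, hc2⟩ := hDdir.2 d1 hd1 d2 hd2
      exact ⟨ups c, ⟨c, hc, rfl⟩, fun y hy => specLE_trans' hc1 hy,
        fun y hy => specLE_trans' hc2 hy⟩
    have hno : ¬ ∃ K ∈ 𝒦, K ⊆ (closure D)ᶜ := by
      rintro ⟨K, ⟨d, hd, rfl⟩, hsub⟩
      exact hsub (specLE_refl' d) (subset_closure hd)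
    have hns : ¬ (⋂₀ 𝒦 ⊆ (closure D)ᶜ) := fun h =>
      hno (hwf.2 𝒦 h𝒦 hff _ isClosed_closure.isOpen_compl h)
    obtain ⟨x, hx𝒦, hxD⟩ := Set.not_subset.mp hns
    rw [Set.notMem_compl_iff] at hxD
    have hub : D ⊆ closure ({x} : Set X) := fun d hd =>
      Set.mem_sInter.mp hx𝒦 (ups d) ⟨d, hd, rfl⟩
    have hAx : A = closure {x} := by
      rw [hAD]
      exact subset_antisymm (closure_minimal hub isClosed_closure)
        (closure_minimal (Set.singleton_subset_iff.mpr hxD) isClosed_closure)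
    exact closure_singleton_unique' hAx
  tfae_have 1 → 4 := by
    intro hs
    refine ⟨sober_to_WF' hs, ?_⟩
    intro A hAc hAi
    obtain ⟨x, hx, -⟩ := hs A hAi hAc
    have hxA : x ∈ A := by rw [hx]; exact subset_closure rfl
    refine ⟨hAc, ⟨x, hxA⟩, {ups x}, ?_, ?_, ?_, ?_⟩
    · intro K hK
      rw [Set.mem_singleton_iff] at hK
      subst hK; exact ups_mem_KSet x
    · refine ⟨⟨ups x, rfl⟩, ?_⟩
      intro K1 hK1 K2 hK2
      rw [Set.mem_singleton_iff] at hK1 hK2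
      subst hK1; subst hK2
      exact ⟨ups x, rfl, le_rfl, le_rfl⟩
    · intro K hK
      rw [Set.mem_singleton_iff] at hK
      subst hK
      exact ⟨x, specLE_refl' x, hxA⟩
    · intro B hBc hBA hBmeet
      obtain ⟨b, hbu, hbB⟩ := hBmeet (ups x) rfl
      have hxB : x ∈ B := closed_lower' hBc hbu hbB
      have : A ⊆ B := by
        rw [hx]; exact closure_minimal (Set.singleton_subset_iff.mpr hxB) hBc
      exact subset_antisymm hBA this
  tfae_have 4 → 1 := by
    rintro ⟨hwf, hr⟩ A hAi hAc
    obtain ⟨-, hAne, 𝒦, h𝒦, hff, hmeet, hmin⟩ := hr A hAc hAi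
    have hno : ¬ ∃ K ∈ 𝒦, K ⊆ Aᶜ := by
      rintro ⟨K, hK, hsub⟩
      obtain ⟨k, hk1, hk2⟩ := hmeet K hK
      exact hsub hk1 hk2
    have hns : ¬ (⋂₀ 𝒦 ⊆ Aᶜ) := fun h => hno (hwf.2 𝒦 h𝒦 hff _ hAc.isOpen_compl h)
    obtain ⟨x, hx𝒦, hxA⟩ := Set.not_subset.mp hns
    rw [Set.notMem_compl_iff] at hxA
    have hclsub : closure ({x} : Set X) ⊆ A :=
      closure_minimal (Set.singleton_subset_iff.mpr hxA) hAc
    have hmeets : ∀ K ∈ 𝒦, (K ∩ closure ({x} : Set X)).Nonempty := fun K hK =>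
      ⟨x, Set.mem_sInter.mp hx𝒦 K hK, subset_closure rfl⟩
    exact closure_singleton_unique' (hmin (closure {x}) isClosed_closure hclsub hmeets).symm
  tfae_have 1 → 5 := by
    intro hs
    refine ⟨sober_to_WF' hs, ?_⟩
    intro A hAc hAi
    obtain ⟨x, hx, -⟩ := hs A hAi hAc
    have hxA : x ∈ A := by rw [hx]; exact subset_closure rfl
    refine ⟨hAc, ⟨x, hxA⟩, ?_⟩
    intro Y _ hY f hf
    refine ⟨f x, subset_antisymm ?_ (closure_mono ?_)⟩
    · refine closure_minimal ?_ isClosed_closure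
      rw [hx]
      have h1 := image_closure_subset_closure_image (s := ({x} : Set X)) hf
      rwa [Set.image_singleton] at h1
    · exact Set.singleton_subset_iff.mpr ⟨x, hxA, rfl⟩
  tfae_have 5 → 1 := by
    rintro ⟨hwf, hwd⟩ A hAi hAc
    obtain ⟨-, -, h⟩ := hwd A hAc hAi
    obtain ⟨y, hy⟩ := h X hwf id continuous_id
    rw [Set.image_id, hAc.closure_eq] at hy
    exact closure_singleton_unique' hy
  tfae_finish
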